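/- Let S be a finite poset with a least element 0, and let R(S) be the S×S matrix with R(S)[x][y] = 1 if x ≤ y or y = 0, else 0. Then the permanent of R(S) equals the number of chains of S that contain the element 0 (including the singleton chain {0}). -/

import Mathlib

set_option linter.unusedSectionVars false


open Matrix Finset

variable {S : Type*}

/-- The Redheffer matrix of a finite poset with a least element `⊥`. -/
def posetRedheffer [PartialOrder S] [OrderBot S] [Fintype S] [DecidableEq S]
    [DecidableRel (α := S) (· ≤ ·)] : Matrix S S ℤ :=
  fun x y => if x ≤ y ∨ y = ⊥ then 1 else 0

section Aux

open Equiv Equiv.Perm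

variable [PartialOrder S] [OrderBot S] [Fintype S] [DecidableEq S]
  [DecidableRel (α := S) (· ≤ ·)]

/-- The orbit of `⊥` under a permutation. -/
private def orb (σ : Perm S) : Finset S := univ.filter (σ.SameCycle ⊥)

private lemma mem_orb {σ : Perm S} {x : S} : x ∈ orb σ ↔ σ.SameCycle ⊥ x := by
  simp [orb]

private lemma bot_mem_orb (σ : Perm S) : (⊥ : S) ∈ orb σ :=
  mem_orb.2 (Equiv.Perm.SameCycle.refl _ _)

private lemma rgood_le {σ : Perm S} (hσ : ∀ i : S, σ i ≤ i ∨ i = ⊥) {x : S} (hx : x ≠ ⊥) :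
    σ x ≤ x := (hσ x).resolve_right hx

private lemma iterate_mem_orb {σ : Perm S} {x : S} (hx : x ∈ orb σ) (n : ℕ) :
    σ^[n] x ∈ orb σ := by
  rw [mem_orb] at *
  exact hx.trans ⟨(n : ℤ), by rw [zpow_natCast, Equiv.Perm.coe_pow]⟩

private lemma iter_bot_mem_orb (σ : Perm S) (n : ℕ) : σ^[n] ⊥ ∈ orb σ :=
  iterate_mem_orb (bot_mem_orb σ) n

private lemma iter_ne_bot {σ : Perm S} {x : S} (hx : ¬ σ.SameCycle ⊥ x) (n : ℕ) :
    σ^[n] x ≠ ⊥ := by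
  intro h
  exact hx (Equiv.Perm.SameCycle.symm
    ⟨(n : ℤ), by rw [zpow_natCast, Equiv.Perm.coe_pow]; exact h⟩)

private lemma iterate_le_self {σ : Perm S} (hσ : ∀ i : S, σ i ≤ i ∨ i = ⊥) {x : S}
    (hx : ¬ σ.SameCycle ⊥ x) : ∀ n, σ^[n] x ≤ x
  | 0 => le_rfl
  | n + 1 => by
    rw [Function.iterate_succ_apply']
    exact (rgood_le hσ (iter_ne_bot hx n)).trans (iterate_le_self hσ hx n)

private lemma fixed_of_not_mem_orb {σ : Perm S} (hσ : ∀ i : S, σ i ≤ i ∨ i = ⊥) {x : S}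
    (hx : x ∉ orb σ) : σ x = x := by
  rw [mem_orb] at hx
  have hxb : x ≠ ⊥ := by
    intro h
    subst h
    exact hx (Equiv.Perm.SameCycle.refl σ ⊥)
  have hx' : ¬ σ.SameCycle ⊥ (σ x) := fun h => hx (Equiv.Perm.sameCycle_apply_right.1 h)
  have h1 : σ x ≤ x := rgood_le hσ hxb
  have h2 : x ≤ σ x := by
    have h3 := iterate_le_self hσ hx' (orderOf σ - 1)
    have ho : orderOf σ - 1 + 1 = orderOf σ := Nat.succ_pred_eq_of_pos (orderOf_pos σ)
    have h4 : σ^[orderOf σ] x = x := by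
      rw [← Equiv.Perm.coe_pow, pow_orderOf_eq_one]; rfl
    calc x = σ^[orderOf σ] x := h4.symm
      _ = σ^[orderOf σ - 1] (σ x) := by
        conv_lhs => rw [← ho, Function.iterate_succ_apply]
      _ ≤ σ x := h3
  exact le_antisymm h1 h2

private lemma fixed_eq_bot_of_mem_orb {σ : Perm S} {x : S} (hx : x ∈ orb σ)
    (hfix : σ x = x) : x = ⊥ := by
  rw [mem_orb] at hx
  obtain ⟨i, hi⟩ := hx.symm
  rw [Equiv.Perm.zpow_apply_eq_self_of_apply_eq_self hfix i] at hi
  exact hi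

private lemma fixed_not_mem_orb {σ : Perm S} {x : S} (hfix : σ x = x) (hx : x ≠ ⊥) :
    x ∉ orb σ := fun h => hx (fixed_eq_bot_of_mem_orb h hfix)

private lemma apply_lt_of_mem_orb {σ : Perm S} (hσ : ∀ i : S, σ i ≤ i ∨ i = ⊥) {x : S}
    (hx : x ∈ orb σ) (hxb : x ≠ ⊥) : σ x < x :=
  lt_of_le_of_ne (rgood_le hσ hxb) (fun h => hxb (fixed_eq_bot_of_mem_orb hx h))

private lemma bot_mem_periodicPts (σ : Perm S) : (⊥ : S) ∈ Function.periodicPts ⇑σ :=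
  ⟨orderOf σ, orderOf_pos σ, by
    show σ^[orderOf σ] ⊥ = ⊥
    rw [← Equiv.Perm.coe_pow, pow_orderOf_eq_one]; rfl⟩

private lemma exists_iter_of_mem_orb {σ : Perm S} {x : S} (hx : x ∈ orb σ) :
    ∃ m, m < Function.minimalPeriod ⇑σ ⊥ ∧ σ^[m] ⊥ = x := by
  rw [mem_orb] at hx
  obtain ⟨i, -, hi⟩ := Equiv.Perm.SameCycle.exists_pow_eq' hx
  refine ⟨i % Function.minimalPeriod ⇑σ ⊥,
    Nat.mod_lt _ (Function.minimalPeriod_pos_of_mem_periodicPts (bot_mem_periodicPts σ)), ?_⟩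
  rw [Function.iterate_mod_minimalPeriod_eq, ← Equiv.Perm.coe_pow]
  exact hi

private lemma iter_decr {σ : Perm S} (hσ : ∀ i : S, σ i ≤ i ∨ i = ⊥) :
    ∀ a b : ℕ, 1 ≤ a → a ≤ b → b < Function.minimalPeriod ⇑σ ⊥ → σ^[b] ⊥ ≤ σ^[a] ⊥ := by
  intro a b ha hab
  induction b, hab using Nat.le_induction with
  | base => intro _; exact le_rfl
  | succ b hab ih =>
    intro hb
    have hb' : b < Function.minimalPeriod ⇑σ ⊥ := Nat.lt_of_succ_lt hb
    have hne : σ^[b] ⊥ ≠ (⊥ : S) := by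
      intro h
      exact Function.not_isPeriodicPt_of_pos_of_lt_minimalPeriod (by omega) hb' h
    calc σ^[b+1] ⊥ = σ (σ^[b] ⊥) := Function.iterate_succ_apply' ..
      _ ≤ σ^[b] ⊥ := rgood_le hσ hne
      _ ≤ σ^[a] ⊥ := ih hb'

private lemma orb_isChain {σ : Perm S} (hσ : ∀ i : S, σ i ≤ i ∨ i = ⊥) :
    IsChain (· ≤ ·) (↑(orb σ) : Set S) := by
  intro x hx y hy _
  have hx' : x ∈ orb σ := hx
  have hy' : y ∈ orb σ := hy
  obtain ⟨m, hm, rfl⟩ := exists_iter_of_mem_orb hx'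
  obtain ⟨n, hn, rfl⟩ := exists_iter_of_mem_orb hy'
  rcases Nat.eq_zero_or_pos m with rfl | hm1
  · exact Or.inl bot_le
  rcases Nat.eq_zero_or_pos n with rfl | hn1
  · exact Or.inr bot_le
  rcases le_total m n with h | h
  · exact Or.inr (iter_decr hσ m n hm1 h hn)
  · exact Or.inl (iter_decr hσ n m hn1 h hm)

private lemma exists_greatest_of_chain {C : Finset S} (hC : IsChain (· ≤ ·) (↑C : Set S))
    (hne : C.Nonempty) : ∃ t ∈ C, ∀ y ∈ C, y ≤ t := by
  obtain ⟨t, ht, hmax⟩ := C.exists_maximal hne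
  refine ⟨t, ht, fun y hy => ?_⟩
  rcases eq_or_ne y t with rfl | hyt
  · exact le_rfl
  · rcases hC.total (Finset.mem_coe.2 ht) (Finset.mem_coe.2 hy) with h | h
    · exact absurd (h.lt_of_ne (Ne.symm hyt)) (fun hlt => lt_irrefl _ (lt_of_lt_of_le hlt (hmax hy hlt.le)))
    · exact h

private lemma le_apply_of_lt {σ : Perm S} (hσ : ∀ i : S, σ i ≤ i ∨ i = ⊥) {x : S}
    (hx : x ∈ orb σ) (hxb : x ≠ ⊥) : ∀ y ∈ orb σ, y < x → y ≤ σ x := by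
  classical
  set C := orb σ with hCdef
  set D := C.filter (· < x) with hD
  have hbotD : (⊥ : S) ∈ D := Finset.mem_filter.2 ⟨bot_mem_orb σ, bot_lt_iff_ne_bot.2 hxb⟩
  have hxD : x ∉ D := fun h => (lt_irrefl x) (Finset.mem_filter.1 h).2
  set A := insert x (D.erase ⊥) with hA
  have hsub : A.image σ ⊆ D := by
    intro z hz
    obtain ⟨w, hw, rfl⟩ := Finset.mem_image.1 hz
    rcases Finset.mem_insert.1 hw with rfl | hw'
    · exact Finset.mem_filter.2 ⟨mem_orb.2 (Equiv.Perm.sameCycle_apply_right.2 (mem_orb.1 hx)),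
        apply_lt_of_mem_orb hσ hx hxb⟩
    · obtain ⟨hwb, hwD⟩ := Finset.mem_erase.1 hw'
      obtain ⟨hwC, hwx⟩ := Finset.mem_filter.1 hwD
      exact Finset.mem_filter.2 ⟨mem_orb.2 (Equiv.Perm.sameCycle_apply_right.2 (mem_orb.1 hwC)),
        lt_trans (apply_lt_of_mem_orb hσ hwC hwb) hwx⟩
  have hcard : D.card ≤ (A.image σ).card := by
    rw [Finset.card_image_of_injective _ σ.injective, hA,
      Finset.card_insert_of_notMem (fun h => hxD (Finset.mem_of_mem_erase h)),
      Finset.card_erase_of_mem hbotD]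
    have h1 : 1 ≤ D.card := Finset.card_pos.2 ⟨⊥, hbotD⟩
    omega
  have heq : A.image σ = D := Finset.eq_of_subset_of_card_le hsub hcard
  obtain ⟨w, hwD, hwmax⟩ := D.exists_maximal ⟨⊥, hbotD⟩
  have hwimg : w ∈ A.image σ := heq ▸ hwD
  obtain ⟨z, hzA, hzw⟩ := Finset.mem_image.1 hwimg
  have hzx : z = x := by
    by_contra hne
    have hz' := (Finset.mem_insert.1 hzA).resolve_left hne
    obtain ⟨hzb, hzD⟩ := Finset.mem_erase.1 hz'
    obtain ⟨hzC, -⟩ := Finset.mem_filter.1 hzD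
    have hlt : σ z < z := apply_lt_of_mem_orb hσ hzC hzb
    rw [hzw] at hlt
    exact lt_irrefl _ (lt_of_lt_of_le hlt (hwmax hzD hlt.le))
  rw [hzx] at hzw
  intro y hyC hyx
  have hyD : y ∈ D := Finset.mem_filter.2 ⟨hyC, hyx⟩
  rcases eq_or_ne y w with rfl | hne
  · rw [hzw]
  · rcases (orb_isChain hσ).total (Finset.mem_coe.2 (Finset.mem_filter.1 hyD).1)
      (Finset.mem_coe.2 (Finset.mem_filter.1 hwD).1) with h | h
    · rw [hzw]; exact h
    · exact absurd (h.lt_of_ne hne.symm) (fun hlt => lt_irrefl _ (lt_of_lt_of_le hlt (hwmax hyD hlt.le)))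

private lemma rgood_inj {σ τ : Perm S} (hσ : ∀ i : S, σ i ≤ i ∨ i = ⊥)
    (hτ : ∀ i : S, τ i ≤ i ∨ i = ⊥) (h : orb σ = orb τ) : σ = τ := by
  have key : ∀ x : S, x ≠ ⊥ → σ x = τ x := by
    intro x hxb
    by_cases hx : x ∈ orb σ
    · have hxτ : x ∈ orb τ := h ▸ hx
      have h1 : σ x ≤ τ x := by
        apply le_apply_of_lt hτ hxτ hxb
        · rw [← h]; exact mem_orb.2 (Equiv.Perm.sameCycle_apply_right.2 (mem_orb.1 hx))
        · exact apply_lt_of_mem_orb hσ hx hxb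
      have h2 : τ x ≤ σ x := by
        apply le_apply_of_lt hσ hx hxb
        · rw [h]; exact mem_orb.2 (Equiv.Perm.sameCycle_apply_right.2 (mem_orb.1 hxτ))
        · exact apply_lt_of_mem_orb hτ hxτ hxb
      exact le_antisymm h1 h2
    · rw [fixed_of_not_mem_orb hσ hx, fixed_of_not_mem_orb hτ (h ▸ hx)]
  apply Equiv.ext
  intro x
  rcases eq_or_ne x ⊥ with rfl | hxb
  · by_contra hne
    have hb : τ⁻¹ (σ ⊥) ≠ ⊥ := by
      intro e
      apply hne
      have he := congrArg τ e
      rwa [Equiv.Perm.inv_def, Equiv.apply_symm_apply] at he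
    have hk := key _ hb
    rw [Equiv.Perm.inv_def, Equiv.apply_symm_apply] at hk
    exact hb (σ.injective hk)
  · exact key x hxb

private lemma exists_rgood :
    ∀ C : Finset S, IsChain (· ≤ ·) (↑C : Set S) → (⊥ : S) ∈ C →
      ∃ σ : Perm S, (∀ i : S, σ i ≤ i ∨ i = ⊥) ∧ orb σ = C := by
  intro C
  induction C using Finset.strongInduction with
  | _ C ih =>
    intro hC hbot
    by_cases hone : C = {⊥}
    · subst hone
      refine ⟨1, fun i => Or.inl le_rfl, ?_⟩
      ext x
      simp [mem_orb, Equiv.Perm.sameCycle_one, eq_comm]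
    · obtain ⟨t, htC, hgreat⟩ := exists_greatest_of_chain hC ⟨⊥, hbot⟩
      have htb : t ≠ ⊥ := by
        intro h
        apply hone
        exact Finset.eq_singleton_iff_unique_mem.2
          ⟨hbot, fun y hy => le_bot_iff.1 (h ▸ hgreat y hy)⟩
      set C' := C.erase t with hC'def
      have hsub : (C' : Set S) ⊆ (C : Set S) := Finset.coe_subset.2 (Finset.erase_subset t C)
      have hC'chain : IsChain (· ≤ ·) (↑C' : Set S) := hC.mono hsub
      have hbot' : (⊥ : S) ∈ C' := Finset.mem_erase.2 ⟨Ne.symm htb, hbot⟩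
      obtain ⟨σ', hg', ho'⟩ := ih C' (Finset.erase_ssubset htC) hC'chain hbot'
      have htfix : σ' t = t := fixed_of_not_mem_orb hg'
        (by rw [ho']; exact Finset.notMem_erase t C)
      set σ := σ' * Equiv.swap ⊥ t with hσdef
      have happly : ∀ x, σ x = σ' (Equiv.swap ⊥ t x) := fun x => rfl
      have hσbot : σ ⊥ = t := by rw [happly, Equiv.swap_apply_left, htfix]
      have hos : σ' ⊥ ∈ C' := by
        rw [← ho']
        exact mem_orb.2 (Equiv.Perm.sameCycle_apply_right.2 (Equiv.Perm.SameCycle.refl σ' ⊥))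
      have hgood : ∀ i : S, σ i ≤ i ∨ i = ⊥ := by
        intro i
        rcases eq_or_ne i ⊥ with rfl | hib
        · exact Or.inr rfl
        refine Or.inl ?_
        rcases eq_or_ne i t with rfl | hit
        · rw [happly, Equiv.swap_apply_right]
          exact hgreat _ (Finset.mem_of_mem_erase hos)
        · rw [happly, Equiv.swap_apply_of_ne_of_ne hib hit]
          exact rgood_le hg' hib
      refine ⟨σ, hgood, ?_⟩
      have hiter : ∀ n : ℕ, n < Function.minimalPeriod ⇑σ' ⊥ → σ^[n+1] t = σ'^[n+1] ⊥ := by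
        intro n
        induction n with
        | zero =>
          intro _
          show σ t = σ' ⊥
          rw [happly, Equiv.swap_apply_right]
        | succ n ihn =>
          intro hn
          have hn' : n < Function.minimalPeriod ⇑σ' ⊥ := Nat.lt_of_succ_lt hn
          have h1 : σ'^[n+1] ⊥ ≠ (⊥ : S) := fun h =>
            Function.not_isPeriodicPt_of_pos_of_lt_minimalPeriod (Nat.succ_ne_zero n) hn h
          have h2 : σ'^[n+1] ⊥ ≠ t := by
            intro h
            have hm : σ'^[n+1] ⊥ ∈ C' := by rw [← ho']; exact iter_bot_mem_orb σ' (n+1)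
            rw [h] at hm
            exact Finset.notMem_erase t C hm
          calc σ^[n+1+1] t = σ (σ^[n+1] t) := Function.iterate_succ_apply' ..
            _ = σ (σ'^[n+1] ⊥) := by rw [ihn hn']
            _ = σ' (σ'^[n+1] ⊥) := by rw [happly, Equiv.swap_apply_of_ne_of_ne h1 h2]
            _ = σ'^[n+1+1] ⊥ := (Function.iterate_succ_apply' ..).symm
      ext x
      simp only [mem_orb]
      constructor
      · intro hx
        by_contra hxC
        have hxb : x ≠ ⊥ := fun h => hxC (h ▸ hbot)
        have hfix : σ x = x := by
          have hxt : x ≠ t := fun h => hxC (h ▸ htC)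
          have hxC' : x ∉ C' := fun h => hxC (Finset.mem_of_mem_erase h)
          rw [happly, Equiv.swap_apply_of_ne_of_ne hxb hxt]
          exact fixed_of_not_mem_orb hg' (by rw [ho']; exact hxC')
        exact (fixed_not_mem_orb hfix hxb) (mem_orb.2 hx)
      · intro hxC
        rcases eq_or_ne x t with rfl | hxt
        · exact ⟨1, by rw [zpow_one]; exact hσbot⟩
        · have hxC' : x ∈ C' := Finset.mem_erase.2 ⟨hxt, hxC⟩
          obtain ⟨m, hm, rfl⟩ := exists_iter_of_mem_orb (show x ∈ orb σ' by
            rw [ho']; exact hxC')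
          rcases Nat.eq_zero_or_pos m with rfl | hm1
          · exact Equiv.Perm.SameCycle.refl σ _
          · have hkey : σ^[m+1] ⊥ = σ'^[m] ⊥ := by
              rw [Function.iterate_succ_apply, hσbot]
              have h5 := hiter (m - 1) (by omega)
              rwa [Nat.sub_add_cancel hm1] at h5
            exact ⟨((m+1 : ℕ) : ℤ), by rw [zpow_natCast, Equiv.Perm.coe_pow]; exact hkey⟩

end Aux

/-- The permanent of the Redheffer matrix of a finite poset with least element `0 = ⊥`
equals the number of chains of `S` containing `⊥` (including the singleton chain `{⊥}`). -/
theorem posetRedheffer_permanent [PartialOrder S] [OrderBot S] [Fintype S] [DecidableEq S]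
    [DecidableRel (α := S) (· ≤ ·)] :
    (posetRedheffer (S := S)).permanent =
      Nat.card {C : Finset S // IsChain (· ≤ ·) (C : Set S) ∧ (⊥ : S) ∈ C} := by
  classical
  have h1 : (posetRedheffer (S := S)).permanent
      = (((univ : Finset (Equiv.Perm S)).filter fun σ => ∀ i, σ i ≤ i ∨ i = ⊥).card : ℤ) := by
    simp only [Matrix.permanent, posetRedheffer]
    rw [Finset.sum_congr rfl fun σ _ => Fintype.prod_boole]
    rw [Finset.sum_boole]
  have h2 : ((univ : Finset (Equiv.Perm S)).filter fun σ => ∀ i, σ i ≤ i ∨ i = ⊥).card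
      = Nat.card {σ : Equiv.Perm S // ∀ i : S, σ i ≤ i ∨ i = ⊥} := by
    rw [Nat.card_eq_fintype_card, Fintype.card_subtype]
  have h3 : Nat.card {σ : Equiv.Perm S // ∀ i : S, σ i ≤ i ∨ i = ⊥}
      = Nat.card {C : Finset S // IsChain (· ≤ ·) (C : Set S) ∧ (⊥ : S) ∈ C} := by
    apply Nat.card_congr
    refine Equiv.ofBijective
      (fun σ => ⟨orb σ.1, orb_isChain σ.2, bot_mem_orb σ.1⟩) ⟨?_, ?_⟩
    · rintro ⟨σ, hσ⟩ ⟨τ, hτ⟩ hh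
      simp only [Subtype.mk.injEq] at hh ⊢
      exact rgood_inj hσ hτ hh
    · rintro ⟨C, hC, hbot⟩
      obtain ⟨σ, hg, ho⟩ := exists_rgood C hC hbot
      exact ⟨⟨σ, hg⟩, Subtype.ext ho⟩
  rw [h1]
  exact_mod_cast congrArg Nat.cast (h2.trans h3)
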